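/- Let N and r be positive integers, let B_1, …, B_r ∈ ℝ^N, and let B be a point of the convex hull of {B_1, …, B_r}. Let m be a positive integer and let c ≥ 0 be a real number. Then there exists a real number α > 0 such that for every linear functional ℓ : ℝ^N → ℝ satisfying ℓ(B_j) ∈ (1/m)ℤ and ℓ(B_j) ≥ −c for all j, the following holds: if ℓ(B) > 0, then ℓ(B) > α. -/

import Mathlib

/-- Given `B₁, …, B_r ∈ ℝ^N`, a point `b` of their convex hull, a positive
integer `m` and a real `c ≥ 0`, there is `α > 0` such that every linear functional `ℓ`
with `ℓ (B j) ∈ (1/m)ℤ` and `ℓ (B j) ≥ -c` for all `j` satisfies: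
if `ℓ b > 0` then `ℓ b > α`. -/
theorem stmt_1 (N r : ℕ) (hN : 0 < N) (hr : 0 < r)
    (B : Fin r → EuclideanSpace ℝ (Fin N)) (b : EuclideanSpace ℝ (Fin N))
    (hb : b ∈ convexHull ℝ (Set.range B))
    (m : ℕ) (hm : 0 < m) (c : ℝ) (hc : 0 ≤ c) :
    ∃ α > (0 : ℝ), ∀ ℓ : EuclideanSpace ℝ (Fin N) →ₗ[ℝ] ℝ,
      (∀ j, (∃ n : ℤ, ℓ (B j) = (n : ℝ) / m) ∧ -c ≤ ℓ (B j)) →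
      0 < ℓ b → α < ℓ b := by
  have hmR : (0:ℝ) < m := by exact_mod_cast hm
  -- extract convex weights indexed by Fin r
  rw [convexHull_range_eq_exists_affineCombination] at hb
  obtain ⟨s, w0, hw0, hw1, hbc⟩ := hb
  set w : Fin r → ℝ := fun j => if j ∈ s then w0 j else 0 with hwdef
  have hw0' : ∀ j, 0 ≤ w j := by
    intro j; simp only [hwdef]; split
    · exact hw0 _ ‹_›
    · exact le_refl 0
  have hwsum : ∑ j, w j = 1 := by
    simp only [hwdef]
    rw [Finset.sum_ite_mem, Finset.univ_inter, hw1]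
  have hbsum : ∑ j, w j • B j = b := by
    rw [← hbc, s.affineCombination_eq_linear_combination B w0 hw1]
    have hterm : ∀ j, w j • B j = if j ∈ s then w0 j • B j else 0 := by
      intro j; simp only [hwdef]; split <;> simp
    simp_rw [hterm]
    rw [Finset.sum_ite_mem, Finset.univ_inter]
  -- the finite candidate set
  set lo : Fin r → ℤ := fun _ => -⌈c * m⌉ with hlo
  set hi : Fin r → ℤ := fun j => if w j = 0 then 0 else ⌈(m * (1 + 2 * c)) / w j⌉ with hhi
  set F : Finset ℝ := (Finset.Icc lo hi).image (fun n => ∑ j, w j * (n j : ℝ) / m) with hF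
  set P : Finset ℝ := F.filter (fun x => 0 < x) with hP
  set T : Finset ℝ := insert (1 + c) P with hT
  have hTne : T.Nonempty := ⟨1 + c, Finset.mem_insert_self _ _⟩
  have h1c : (0:ℝ) < 1 + c := by linarith
  have hTpos : ∀ x ∈ T, 0 < x := by
    intro x hx
    rcases Finset.mem_insert.1 hx with h | h
    · exact h ▸ h1c
    · exact (Finset.mem_filter.1 h).2
  set α : ℝ := T.min' hTne / 2 with hα
  have hminpos : 0 < T.min' hTne := hTpos _ (T.min'_mem hTne)
  refine ⟨α, by positivity, ?_⟩
  intro ℓ h hpos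
  have hv : ℓ b = ∑ j, w j * ℓ (B j) := by
    rw [← hbsum, map_sum]
    simp [smul_eq_mul]
  by_cases hcase : 1 + c < ℓ b
  · have : T.min' hTne ≤ 1 + c := T.min'_le _ (Finset.mem_insert_self _ _)
    have : α < 1 + c := by rw [hα]; linarith
    linarith
  · push_neg at hcase
    choose n hn using fun j => (h j).1
    set n' : Fin r → ℤ := fun j => if w j = 0 then 0 else n j with hn'
    have hveq : ℓ b = ∑ j, w j * (n' j : ℝ) / m := by
      rw [hv]
      refine Finset.sum_congr rfl ?_
      intro j _
      by_cases hwj : w j = 0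
      · simp [hn', hwj]
      · simp only [hn', if_neg hwj]
        rw [hn j, mul_div_assoc]
    have hmem : n' ∈ Finset.Icc lo hi := by
      rw [Finset.mem_Icc]
      constructor <;> intro j
      · by_cases hwj : w j = 0
        · have h0 : (0:ℤ) ≤ ⌈c * m⌉ := Int.ceil_nonneg (by positivity)
          have hz : n' j = 0 := by simp [hn', hwj]
          have hl : lo j = -⌈c * m⌉ := rfl
          rw [hl, hz]; linarith
        · have h1 : -c ≤ (n j : ℝ) / m := (hn j) ▸ (h j).2
          have h2 : -(c * m) ≤ (n j : ℝ) := by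
            have h1m := mul_le_mul_of_nonneg_right h1 (le_of_lt hmR)
            rw [div_mul_cancel₀ _ (ne_of_gt hmR)] at h1m
            linarith
          have h3 : ((-⌈c * m⌉ : ℤ) : ℝ) ≤ (n j : ℝ) := by
            push_cast
            calc (-(⌈c * m⌉ : ℝ)) ≤ -(c * m) := by
                  simp only [neg_le_neg_iff]; exact Int.le_ceil _
            _ ≤ n j := h2
          have h4 : (-⌈c * m⌉ : ℤ) ≤ n j := by exact_mod_cast h3
          simp only [hn', hlo]
          split
          · have : (0:ℤ) ≤ ⌈c * m⌉ := Int.ceil_nonneg (by positivity)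
            omega
          · exact h4
      · by_cases hwj : w j = 0
        · simp [hn', hhi, hwj]
        · have hwpos : 0 < w j := lt_of_le_of_ne (hw0' j) (Ne.symm hwj)
          -- bound: w j * ℓ (B j) ≤ ℓ b + c ≤ 1 + 2c
          have hrest : -c ≤ ∑ k ∈ Finset.univ.erase j, w k * ℓ (B k) := by
            have h5 : ∀ k ∈ Finset.univ.erase j, -c * w k ≤ w k * ℓ (B k) := by
              intro k _
              have := (h k).2
              nlinarith [hw0' k]
            calc -c = -c * 1 - 0 := by ring
            _ ≤ -c * (∑ k ∈ Finset.univ.erase j, w k) := by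
                have hle1 : ∑ k ∈ Finset.univ.erase j, w k ≤ 1 := by
                  rw [← hwsum, ← Finset.add_sum_erase _ w (Finset.mem_univ j)]
                  nlinarith [hw0' j]
                have hge0 : 0 ≤ ∑ k ∈ Finset.univ.erase j, w k :=
                  Finset.sum_nonneg fun k _ => hw0' k
                nlinarith
            _ = ∑ k ∈ Finset.univ.erase j, -c * w k := by rw [Finset.mul_sum]
            _ ≤ _ := Finset.sum_le_sum h5
          have hsplit : ℓ b = w j * ℓ (B j) + ∑ k ∈ Finset.univ.erase j, w k * ℓ (B k) := by
            rw [hv, ← Finset.add_sum_erase _ _ (Finset.mem_univ j)]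
          have hbound : w j * ℓ (B j) ≤ 1 + 2 * c := by
            have : w j * ℓ (B j) ≤ ℓ b + c := by linarith
            linarith
          have hnj : (n j : ℝ) ≤ (m * (1 + 2 * c)) / w j := by
            rw [le_div_iff₀ hwpos]
            have : w j * ((n j : ℝ) / m) ≤ 1 + 2 * c := by rw [← hn j]; exact hbound
            calc (n j : ℝ) * w j = (w j * ((n j:ℝ)/m)) * m := by field_simp
            _ ≤ (1 + 2*c) * m := by nlinarith
            _ = m * (1 + 2*c) := by ring
          have : (n j : ℤ) ≤ ⌈(m * (1 + 2 * c)) / w j⌉ := by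
            have := Int.le_ceil ((m * (1 + 2 * c)) / w j)
            exact_mod_cast hnj.trans this
          simp only [hn', hhi, if_neg hwj]
          exact this
    have hvF : ℓ b ∈ F := by
      rw [hF]
      exact Finset.mem_image.2 ⟨n', hmem, hveq.symm⟩
    have hvP : ℓ b ∈ P := Finset.mem_filter.2 ⟨hvF, hpos⟩
    have : T.min' hTne ≤ ℓ b := T.min'_le _ (Finset.mem_insert_of_mem hvP)
    rw [hα]
    linarith
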